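/- Let x(t,·) be a time-dependent family of C² diffeomorphisms of ℝⁿ with inverse X(t,·), and define F(t,x) = (∂x/∂X)|_{X=X(t,x)} and G = F - I. Then for all i,j,k: ∂_j G_{ik} - ∂_k G_{ij} = G_{mk} ∂_m G_{ij} - G_{mj} ∂_m G_{ik}, where ∂ denotes spatial derivatives and summation over m is implied. -/

import Mathlib

/-- Partial derivative `∂_i f` on `ℝⁿ`. -/
noncomputable def pdn {n : ℕ} (i : Fin n) (f : (Fin n → ℝ) → ℝ) (x : Fin n → ℝ) : ℝ :=
  fderiv ℝ f x (Pi.single i 1)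

/-- Lemma 2.1, identity (2.1): if `φ` is a C² diffeomorphism (a deformation at a fixed
time) with inverse `ψ`, `F(x) = (∂φ/∂X)|_{X=ψ(x)}` its deformation gradient in spatial
coordinates and `G = F - I`, then
`∂_j G_{ik} - ∂_k G_{ij} = G_{mk} ∂_m G_{ij} - G_{mj} ∂_m G_{ik}`. -/
theorem deformation_gradient_constraint (n : ℕ)
    (φ ψ : (Fin n → ℝ) → Fin n → ℝ)
    (hφ : ContDiff ℝ 2 φ) (hψ : ContDiff ℝ 2 ψ)
    (hleft : Function.LeftInverse ψ φ) (hright : Function.RightInverse ψ φ)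
    (F G : (Fin n → ℝ) → Fin n → Fin n → ℝ)
    (hF : ∀ x i j, F x i j = pdn j (fun X => φ X i) (ψ x))
    (hG : ∀ x i j, G x i j = F x i j - (if i = j then 1 else 0)) :
    ∀ (x : Fin n → ℝ) (i j k : Fin n),
      pdn j (fun y => G y i k) x - pdn k (fun y => G y i j) x =
        ∑ m : Fin n,
          (G x m k * pdn m (fun y => G y i j) x - G x m j * pdn m (fun y => G y i k) x) := by
  intro x i j k

  have hφd : Differentiable ℝ φ := hφ.differentiable (by norm_num)
  have hψd : Differentiable ℝ ψ := hψ.differentiable (by norm_num)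
  have hB : Differentiable ℝ (fderiv ℝ φ) :=
    (hφ.fderiv_right (m := 1) (by norm_num)).differentiable (by norm_num)
  set e : Fin n → (Fin n → ℝ) := fun m => Pi.single m 1 with he
  set B := fderiv ℝ φ with hBdef
  set B' := fderiv ℝ B (ψ x) with hB'def
  set Dψ := fderiv ℝ ψ x with hDψ
  -- F in terms of the full derivative
  have hFeq : ∀ y a b, F y a b = B (ψ y) (e b) a := by
    intro y a b
    rw [hF, pdn]
    have : HasFDerivAt (fun X => φ X a)
        ((ContinuousLinearMap.proj a).comp (B (ψ y))) (ψ y) :=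
      (ContinuousLinearMap.proj a : ((Fin n → ℝ)) →L[ℝ] ℝ).hasFDerivAt.comp _ (hφd (ψ y)).hasFDerivAt
    rw [this.fderiv]; rfl
  -- derivative of G components
  have hpdnG : ∀ m a b, pdn m (fun y => G y a b) x = B' (Dψ (e m)) (e b) a := by
    intro m a b
    have h1 : HasFDerivAt ψ Dψ x := (hψd x).hasFDerivAt
    have h2 : HasFDerivAt B B' (ψ x) := (hB (ψ x)).hasFDerivAt
    have h3 : HasFDerivAt (fun y => B (ψ y)) (B'.comp Dψ) x := h2.comp x h1
    set c : ((Fin n → ℝ) →L[ℝ] (Fin n → ℝ)) →L[ℝ] ℝ :=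
      (ContinuousLinearMap.proj a).comp (ContinuousLinearMap.apply ℝ (Fin n → ℝ) (e b)) with hc
    have h4 : HasFDerivAt (fun y => c (B (ψ y))) (c.comp (B'.comp Dψ)) x :=
      c.hasFDerivAt.comp x h3
    have h5 : HasFDerivAt (fun y => G y a b) (c.comp (B'.comp Dψ)) x := by
      have : (fun y => G y a b)
          = fun y => c (B (ψ y)) - (if a = b then (1:ℝ) else 0) := by
        funext y
        rw [hG, hFeq]
        rfl
      rw [this]
      exact h4.sub_const _
    rw [pdn, h5.fderiv]
    rfl
  -- inverse relation on derivatives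
  have hinv : Dψ.comp (B (ψ x)) = ContinuousLinearMap.id ℝ (Fin n → ℝ) := by
    have hcomp : HasFDerivAt (ψ ∘ φ)
        ((fderiv ℝ ψ (φ (ψ x))).comp (B (ψ x))) (ψ x) :=
      (hψd (φ (ψ x))).hasFDerivAt.comp _ (hφd (ψ x)).hasFDerivAt
    rw [hright x] at hcomp
    have hid : HasFDerivAt (ψ ∘ φ) (ContinuousLinearMap.id ℝ (Fin n → ℝ)) (ψ x) := by
      have : ψ ∘ φ = id := funext hleft
      rw [this]
      exact hasFDerivAt_id _
    exact hcomp.unique hid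
  -- key sum computation
  have hsum : ∀ a b d, (∑ m, F x m d * pdn m (fun y => G y a b) x) = B' (e d) (e b) a := by
    intro a b d
    set L : (Fin n → ℝ) →L[ℝ] ℝ :=
      ((ContinuousLinearMap.proj a).comp (ContinuousLinearMap.apply ℝ (Fin n → ℝ) (e b))).comp
        (B'.comp Dψ) with hL
    have hLe : ∀ m, pdn m (fun y => G y a b) x = L (e m) := by
      intro m; rw [hpdnG]; rfl
    have hv : (∑ m, (B (ψ x) (e d)) m • e m) = B (ψ x) (e d) := by
      funext p
      simp [e, Finset.sum_apply, Pi.single_apply]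
    calc (∑ m, F x m d * pdn m (fun y => G y a b) x)
        = ∑ m, L ((B (ψ x) (e d)) m • e m) := by
          refine Finset.sum_congr rfl fun m _ => ?_
          rw [hFeq, hLe, map_smul, smul_eq_mul]
      _ = L (B (ψ x) (e d)) := by rw [← map_sum, hv]
      _ = B' (Dψ (B (ψ x) (e d))) (e b) a := rfl
      _ = B' (e d) (e b) a := by
          have : Dψ (B (ψ x) (e d)) = e d := by
            have := congrArg (fun (T : (Fin n → ℝ) →L[ℝ] (Fin n → ℝ)) => T (e d)) hinv
            simpa using this
          rw [this]
  -- symmetry of second derivative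
  have hsymm : B' (e k) (e j) = B' (e j) (e k) :=
    second_derivative_symmetric (fun y => (hφd y).hasFDerivAt)
      ((hB (ψ x)).hasFDerivAt) (e k) (e j)
  -- put it together
  have hGF : ∀ m d, G x m d = F x m d - (if m = d then (1:ℝ) else 0) := fun m d => hG x m d
  have expand : ∀ a b d,
      (∑ m, G x m d * pdn m (fun y => G y a b) x)
        = B' (e d) (e b) a - pdn d (fun y => G y a b) x := by
    intro a b d
    have : (∑ m, G x m d * pdn m (fun y => G y a b) x)
        = (∑ m, F x m d * pdn m (fun y => G y a b) x)
          - ∑ m, (if m = d then (1:ℝ) else 0) * pdn m (fun y => G y a b) x := by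
      rw [← Finset.sum_sub_distrib]
      exact Finset.sum_congr rfl fun m _ => by rw [hGF]; ring
    rw [this, hsum]
    congr 1
    simp
  rw [Finset.sum_sub_distrib, expand, expand]
  have h1 := hpdnG j i k
  have h2 := hpdnG k i j
  have h3 : B' (e k) (e j) i = B' (e j) (e k) i := by rw [hsymm]
  linarith
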